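/- arXiv:1304.4642 — 3 statements merged into one kernel-verified Lean document; each statement's English description precedes it below -/
import Mathlib

section
/- If f : (ZMod 2)^n → ZMod 2 is bent, then n is even. -/
noncomputable def signF (n : ℕ) (f : (Fin n → ZMod 2) → ZMod 2) : (Fin n → ZMod 2) → ℝ :=
  fun x => (-1 : ℝ) ^ (f x).val / Real.sqrt (2 ^ n)

noncomputable def fourierT (n : ℕ) (F : (Fin n → ZMod 2) → ℝ) : (Fin n → ZMod 2) → ℝ :=
  fun w => (Real.sqrt (2 ^ n))⁻¹ * ∑ x : Fin n → ZMod 2, (-1 : ℝ) ^ (∑ i, (w i).val * (x i).val) * F x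

theorem bent_implies_even (n : ℕ) (hn : 1 ≤ n) (f : (Fin n → ZMod 2) → ZMod 2)
    (hbent : ∀ w, |fourierT n (signF n f) w| = (Real.sqrt (2 ^ n))⁻¹) :
    Even n := by
  set S : ℤ := ∑ x : Fin n → ZMod 2, (-1 : ℤ) ^ (f x).val with hS
  have hpow : (0:ℝ) < 2 ^ n := by positivity
  have hsq : Real.sqrt (2 ^ n) ≠ 0 := ne_of_gt (Real.sqrt_pos.2 hpow)
  have hcast : ((S:ℝ)) = ∑ x : Fin n → ZMod 2, (-1:ℝ) ^ (f x).val := by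
    rw [hS]; push_cast; ring
  have hval : fourierT n (signF n f) 0 = (S : ℝ) / 2 ^ n := by
    simp only [fourierT, signF, Pi.zero_apply, ZMod.val_zero, zero_mul, Finset.sum_const_zero,
      pow_zero, one_mul]
    rw [← Finset.sum_div, ← hcast, inv_mul_eq_div, div_div, Real.mul_self_sqrt hpow.le]
  have h0 := hbent 0
  rw [hval] at h0
  have habs : |(S:ℝ)| = Real.sqrt (2 ^ n) := by
    rw [abs_div, abs_of_pos hpow] at h0
    field_simp at h0
    apply mul_right_cancel₀ hsq
    rw [h0, Real.mul_self_sqrt hpow.le]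
  have hSsq : (S:ℝ)^2 = 2 ^ n := by
    rw [← sq_abs, habs, Real.sq_sqrt hpow.le]
  have hSsqZ : S ^ 2 = 2 ^ n := by exact_mod_cast hSsq
  have hnat : S.natAbs ^ 2 = 2 ^ n := by
    have := congrArg Int.natAbs hSsqZ
    simpa [Int.natAbs_pow] using this
  have h2 : 2 * S.natAbs.factorization 2 = n := by
    have h := congrArg (fun m : ℕ => m.factorization 2) hnat
    simp [Nat.factorization_pow, Nat.Prime.factorization_pow (p := 2) Nat.prime_two] at h
    exact h
  exact ⟨S.natAbs.factorization 2, by omega⟩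
end

section
/- Given k ≥ 2 distinct Boolean strings of length N, there exists a subset S of indices of size at most k − 1 such that the restrictions of the strings to S are pairwise distinct. -/
theorem distinguishing_aux (N : ℕ) : ∀ T : Finset (Fin N → Bool), T.Nonempty →
    ∃ S : Finset (Fin N), S.card + 1 ≤ T.card ∧
      ∀ f ∈ T, ∀ g ∈ T, f ≠ g → ∃ a ∈ S, f a ≠ g a := by
  intro T
  induction T using Finset.strongInduction with
  | _ T ih =>
    intro hT
    by_cases h : ∀ f ∈ T, ∀ g ∈ T, f = g
    · exact ⟨∅, by simpa using Finset.card_pos.mpr hT,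
        fun f hf g hg hfg => absurd (h f hf g hg) hfg⟩
    · push_neg at h
      obtain ⟨f, hf, g, hg, hfg⟩ := h
      obtain ⟨a, ha⟩ := Function.ne_iff.mp hfg
      set A := T.filter (fun x => x a = true) with hA
      set B := T.filter (fun x => ¬ (x a = true)) with hB
      have hcard : A.card + B.card = T.card :=
        Finset.card_filter_add_card_filter_not _
      have hmemA : ∀ x, x ∈ A ↔ x ∈ T ∧ x a = true := by
        intro x; simp [hA]
      have hmemB : ∀ x, x ∈ B ↔ x ∈ T ∧ ¬ (x a = true) := by
        intro x; simp [hB]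
      have hAne : A.Nonempty := by
        cases hfa : f a with
        | true => exact ⟨f, (hmemA f).mpr ⟨hf, hfa⟩⟩
        | false =>
          refine ⟨g, (hmemA g).mpr ⟨hg, ?_⟩⟩
          cases hga : g a with
          | true => rfl
          | false => exact absurd (hfa.trans hga.symm) ha
      have hBne : B.Nonempty := by
        cases hfa : f a with
        | false => exact ⟨f, (hmemB f).mpr ⟨hf, by simp [hfa]⟩⟩
        | true =>
          refine ⟨g, (hmemB g).mpr ⟨hg, ?_⟩⟩
          cases hga : g a with
          | false => simp [hga]
          | true => exact absurd (hfa.trans hga.symm) ha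
      have hAsub : A ⊂ T := by
        refine ⟨Finset.filter_subset _ _, fun hsub => ?_⟩
        obtain ⟨x, hx⟩ := hBne
        obtain ⟨hxT, hxa⟩ := (hmemB x).mp hx
        exact hxa ((hmemA x).mp (hsub hxT)).2
      have hBsub : B ⊂ T := by
        refine ⟨Finset.filter_subset _ _, fun hsub => ?_⟩
        obtain ⟨x, hx⟩ := hAne
        obtain ⟨hxT, hxa⟩ := (hmemA x).mp hx
        exact ((hmemB x).mp (hsub hxT)).2 hxa
      obtain ⟨SA, hSAc, hSAsep⟩ := ih A hAsub hAne
      obtain ⟨SB, hSBc, hSBsep⟩ := ih B hBsub hBne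
      refine ⟨insert a (SA ∪ SB), ?_, ?_⟩
      · have h1 := Finset.card_insert_le a (SA ∪ SB)
        have h2 := Finset.card_union_le SA SB
        omega
      · intro p hp q hq hpq
        by_cases hpa : p a = q a
        · cases hpav : p a with
          | false =>
            have hpB : p ∈ B := (hmemB p).mpr ⟨hp, by simp [hpav]⟩
            have hqB : q ∈ B := (hmemB q).mpr ⟨hq, by simp [← hpa, hpav]⟩
            obtain ⟨b, hbS, hb⟩ := hSBsep p hpB q hqB hpq
            exact ⟨b, Finset.mem_insert_of_mem (Finset.mem_union_right _ hbS), hb⟩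
          | true =>
            have hpA : p ∈ A := (hmemA p).mpr ⟨hp, hpav⟩
            have hqA : q ∈ A := (hmemA q).mpr ⟨hq, by rw [← hpa]; exact hpav⟩
            obtain ⟨b, hbS, hb⟩ := hSAsep p hpA q hqA hpq
            exact ⟨b, Finset.mem_insert_of_mem (Finset.mem_union_left _ hbS), hb⟩
        · exact ⟨a, Finset.mem_insert_self _ _, hpa⟩

theorem distinguishing_subset (N k : ℕ) (hk : 2 ≤ k) (y : Fin k → Fin N → Bool)
    (hy : Function.Injective y) :
    ∃ S : Finset (Fin N), S.card ≤ k - 1 ∧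
      ∀ i j : Fin k, i ≠ j → ∃ a ∈ S, y i a ≠ y j a := by
  have hTne : (Finset.univ.image y).Nonempty := by
    refine Finset.Nonempty.image ?_ y
    exact ⟨⟨0, by omega⟩, Finset.mem_univ _⟩
  obtain ⟨S, hSc, hSsep⟩ := distinguishing_aux N (Finset.univ.image y) hTne
  have hcard : (Finset.univ.image y).card = k := by
    rw [Finset.card_image_of_injective _ hy, Finset.card_univ, Fintype.card_fin]
  refine ⟨S, by omega, fun i j hij => ?_⟩
  obtain ⟨b, hbS, hb⟩ := hSsep (y i) (Finset.mem_image_of_mem y (Finset.mem_univ i))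
    (y j) (Finset.mem_image_of_mem y (Finset.mem_univ j)) (fun h => hij (hy h))
  exact ⟨b, hbS, hb⟩
end

section
/- The string s is a b-shift of f (meaning f(x + s) = f(x) + b for all x) if and only if the autocorrelation satisfies (F*F)(s) = (-1)^b, where F(x) = (-1)^{f(x)}/√(2^n). -/
lemma neg_one_val_mul (a c : ZMod 2) :
    ((-1:ℝ)) ^ a.val * (-1) ^ c.val = (-1) ^ (a + c).val := by
  have h0 : (0 : ZMod 2).val = 0 := rfl
  have h1 : (1 : ZMod 2).val = 1 := rfl
  have h2 : (2 : ZMod 2).val = 0 := rfl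
  have h01 : ∀ a : ZMod 2, a = 0 ∨ a = 1 := by decide
  rcases h01 a with rfl | rfl <;> rcases h01 c with rfl | rfl <;> norm_num [h0, h1, h2]

lemma neg_one_val_inj (a c : ZMod 2) :
    ((-1:ℝ)) ^ a.val = (-1) ^ c.val ↔ a = c := by
  have h0 : (0 : ZMod 2).val = 0 := rfl
  have h1 : (1 : ZMod 2).val = 1 := rfl
  have h01 : ∀ a : ZMod 2, a = 0 ∨ a = 1 := by decide
  rcases h01 a with rfl | rfl <;> rcases h01 c with rfl | rfl <;> norm_num [h0, h1]

lemma zmod2_shift (u v w : ZMod 2) : v = u + w ↔ u + v = w := by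
  revert u v w; decide

lemma neg_one_pow_le_one (k : ℕ) : ((-1:ℝ)) ^ k ≤ 1 := by
  rcases Nat.even_or_odd k with h | h
  · simp [h.neg_one_pow]
  · simp [h.neg_one_pow]

lemma neg_one_le_neg_one_pow (k : ℕ) : (-1:ℝ) ≤ (-1:ℝ) ^ k := by
  rcases Nat.even_or_odd k with h | h
  · simp [h.neg_one_pow]
  · simp [h.neg_one_pow]

theorem bshift_iff_autocorrelation (n : ℕ) (f : (Fin n → ZMod 2) → ZMod 2)
    (s : Fin n → ZMod 2) (b : ZMod 2) :
    (∀ x, f (x + s) = f x + b) ↔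
      (∑ x : Fin n → ZMod 2, signF n f x * signF n f (x + s)) = (-1 : ℝ) ^ b.val := by
  have hpos : (0:ℝ) < 2 ^ n := by positivity
  have hsq : Real.sqrt (2 ^ n) * Real.sqrt (2 ^ n) = 2 ^ n :=
    Real.mul_self_sqrt (le_of_lt hpos)
  have hterm : ∀ x, signF n f x * signF n f (x + s)
      = (-1:ℝ) ^ ((f x + f (x + s)).val) / 2 ^ n := by
    intro x
    simp only [signF, div_mul_div_comm, neg_one_val_mul, hsq]
  have hcard : (Fintype.card (Fin n → ZMod 2)) = 2 ^ n := by
    simp [Fintype.card_fun]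
  constructor
  · intro h
    have h1 : ∀ x : Fin n → ZMod 2, signF n f x * signF n f (x + s)
        = (-1:ℝ) ^ b.val / 2 ^ n := by
      intro x
      rw [hterm x]
      have hb : f x + f (x + s) = b := (zmod2_shift _ _ _).mp (h x)
      rw [hb]
    rw [Finset.sum_congr rfl (fun x _ => h1 x), Finset.sum_const]
    rw [Finset.card_univ, hcard]
    rw [nsmul_eq_mul]; push_cast; field_simp
  · intro h x
    set g : (Fin n → ZMod 2) → ℝ := fun y => (-1:ℝ) ^ ((f y + f (y + s)).val) with hg
    have hsum : ∑ y : Fin n → ZMod 2, g y = 2 ^ n * (-1:ℝ) ^ b.val := by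
      have := h
      rw [Finset.sum_congr rfl (fun y _ => hterm y)] at this
      rw [← Finset.sum_div] at this
      field_simp at this
      linarith [this]
    have hall : ∀ y : Fin n → ZMod 2, g y = (-1:ℝ) ^ b.val := by
      have hval : b.val = 0 ∨ b.val = 1 := by
        have : b = 0 ∨ b = 1 := (by decide : ∀ a : ZMod 2, a = 0 ∨ a = 1) b
        rcases this with rfl | rfl
        · exact Or.inl rfl
        · exact Or.inr rfl
      rcases hval with hb | hb
      · rw [hb] at hsum ⊢
        have hle : ∀ y ∈ Finset.univ (α := Fin n → ZMod 2), g y ≤ 1 := fun y _ =>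
          neg_one_pow_le_one _
        have heq : ∑ y : Fin n → ZMod 2, g y = ∑ _y : Fin n → ZMod 2, (1:ℝ) := by
          rw [hsum, Finset.sum_const, Finset.card_univ, hcard]; simp
        intro y
        simpa using (Finset.sum_eq_sum_iff_of_le hle).mp heq y (Finset.mem_univ y)
      · rw [hb] at hsum ⊢
        have hle : ∀ y ∈ Finset.univ (α := Fin n → ZMod 2), (-1:ℝ) ≤ g y := fun y _ =>
          neg_one_le_neg_one_pow _
        have heq : ∑ _y : Fin n → ZMod 2, (-1:ℝ) = ∑ y : Fin n → ZMod 2, g y := by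
          rw [hsum, Finset.sum_const, Finset.card_univ, hcard]; simp
        intro y
        have := (Finset.sum_eq_sum_iff_of_le hle).mp heq y (Finset.mem_univ y)
        simpa using this.symm
    have hx : f x + f (x + s) = b := (neg_one_val_inj _ _).mp (hall x)
    exact (zmod2_shift _ _ _).mpr hx
end
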